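/- Let f : (0,∞) → ℝ be a Lipschitz function and α : (0,∞) → ℝ a positive bounded function. Then limsup_{u→∞} (1/u)·(α(u)·f(u) − f(α(u)·u)) ≥ 0. -/

import Mathlib

set_option maxHeartbeats 1000000


open Filter

theorem stmt0 (f α : ℝ → ℝ) (K : ℝ) (hK : 0 ≤ K)
    (hf : ∀ x y, 0 < x → 0 < y → |f x - f y| ≤ K * |x - y|)
    (hα : ∀ u, 0 < u → 0 < α u) (M : ℝ) (hM : ∀ u, 0 < u → α u ≤ M) :
    0 ≤ limsup (fun u => u⁻¹ * (α u * f u - f (α u * u))) atTop := by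
  set E : ℝ → ℝ := fun u => u⁻¹ * (α u * f u - f (α u * u)) with hE
  have hM0 : 0 < M := lt_of_lt_of_le (hα 1 one_pos) (hM 1 one_pos)
  by_cases hbdd : IsBoundedUnder (· ≤ ·) atTop E
  · -- main case
    by_contra hneg
    push_neg at hneg
    set δ : ℝ := -(limsup E atTop) / 2 with hδ
    have hδ0 : 0 < δ := by rw [hδ]; linarith
    have hlt : limsup E atTop < -δ := by
      have : limsup E atTop < 0 := hneg
      rw [hδ]; linarith
    have hev : ∀ᶠ u in atTop, E u < -δ := eventually_lt_of_limsup_lt hlt hbdd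
    obtain ⟨U0, hU0⟩ := eventually_atTop.mp hev
    set U : ℝ := max U0 1 with hU
    have hU1 : (1:ℝ) ≤ U := le_max_right _ _
    have hUpos : (0:ℝ) < U := lt_of_lt_of_le one_pos hU1
    have hEU : ∀ u, U ≤ u → E u < -δ := fun u hu => hU0 u (le_trans (le_max_left _ _) hu)
    set ψ : ℝ → ℝ := fun u => f u / u with hψ
    set Cb : ℝ := |f U| + K + K * U with hCb
    have hCb0 : 0 ≤ Cb := by positivity
    -- bound on ψ for u ≥ U
    have hψbd : ∀ u, U ≤ u → |ψ u| ≤ Cb := by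
      intro u hu
      have hu0 : 0 < u := lt_of_lt_of_le hUpos hu
      have hu1 : 1 ≤ u := le_trans hU1 hu
      have h1 : |f u| ≤ |f U| + K * |u - U| := by
        have := hf u U hu0 hUpos
        calc |f u| = |f u - f U + f U| := by ring_nf
          _ ≤ |f u - f U| + |f U| := abs_add_le _ _
          _ ≤ K * |u - U| + |f U| := by linarith
          _ = |f U| + K * |u - U| := by ring
      have h2 : |u - U| ≤ u := by
        rw [abs_sub_le_iff]; constructor <;> nlinarith
      have h3 : |f u| ≤ |f U| * u + K * u + K * U * u := by
        nlinarith [abs_nonneg (f U), mul_le_mul_of_nonneg_left h2 hK,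
          mul_nonneg (abs_nonneg (f U)) (by linarith : (0:ℝ) ≤ u - 1),
          mul_nonneg (mul_nonneg hK hUpos.le) hu0.le]
      rw [hψ]
      rw [abs_div, abs_of_pos hu0, div_le_iff₀ hu0]
      calc |f u| ≤ |f U| * u + K * u + K * U * u := h3
        _ = Cb * u := by rw [hCb]; ring
    -- key step inequality
    have hkey : ∀ u, U ≤ u → f (α u * u) ≥ α u * f u + δ * u ∧ ψ (α u * u) ≥ ψ u + δ / M := by
      intro u hu
      have hu0 : 0 < u := lt_of_lt_of_le hUpos hu
      have hαu : 0 < α u := hα u hu0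
      have hαM : α u ≤ M := hM u hu0
      have h1 : E u < -δ := hEU u hu
      have h2 : f (α u * u) ≥ α u * f u + δ * u := by
        rw [hE] at h1
        simp only at h1
        have := mul_lt_mul_of_pos_right h1 hu0
        rw [inv_mul_eq_div, div_mul_cancel₀ _ (ne_of_gt hu0)] at this
        nlinarith
      refine ⟨h2, ?_⟩
      have hαu0 : 0 < α u * u := mul_pos hαu hu0
      rw [hψ]
      simp only
      rw [ge_iff_le, div_add_div _ _ (ne_of_gt hu0) (ne_of_gt hM0), div_le_div_iff₀ (by positivity) hαu0]
      nlinarith [mul_nonneg (sub_nonneg.mpr h2) (mul_pos hu0 hM0).le,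
        mul_nonneg (mul_nonneg hδ0.le (mul_pos hu0 hu0).le) (sub_nonneg.mpr hαM)]
    -- boundedness of ψ
    have hψub : ∀ᶠ u in atTop, ψ u ≤ Cb := by
      filter_upwards [eventually_ge_atTop U] with u hu
      exact le_trans (le_abs_self _) (hψbd u hu)
    have hψlb : ∀ᶠ u in atTop, -Cb ≤ ψ u := by
      filter_upwards [eventually_ge_atTop U] with u hu
      exact (abs_le.mp (hψbd u hu)).1
    have hψbdd : IsBoundedUnder (· ≤ ·) atTop ψ := ⟨Cb, by simpa [eventually_map] using hψub⟩
    have hψcob : IsCoboundedUnder (· ≤ ·) atTop ψ :=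
      IsBoundedUnder.isCoboundedUnder_le ⟨-Cb, by simpa [eventually_map] using hψlb⟩
    set L : ℝ := limsup ψ atTop with hL
    set ε : ℝ := δ / (4 * M) with hε
    have hε0 : 0 < ε := by positivity
    have hup : ∀ᶠ u in atTop, ψ u < L + ε :=
      eventually_lt_of_limsup_lt (by linarith) hψbdd
    obtain ⟨W0, hW0⟩ := eventually_atTop.mp hup
    set W : ℝ := max W0 U with hW
    have hWU : U ≤ W := le_max_right _ _
    have hWpos : 0 < W := lt_of_lt_of_le hUpos hWU
    have hWev : ∀ u, W ≤ u → ψ u < L + ε := fun u hu => hW0 u (le_trans (le_max_left _ _) hu)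
    have hfreq : ∃ᶠ u in atTop, L - ε < ψ u :=
      frequently_lt_of_lt_limsup hψcob (by linarith)
    -- choose V large
    set V : ℝ := max (max U W) ((|f W| + K * W + W * Cb + 1) / δ) with hV
    obtain ⟨u₀, hu₀V, hu₀ψ⟩ := (hfreq.and_eventually (eventually_ge_atTop V)).exists
    have hu₀ψ' : L - ε < ψ u₀ := hu₀V
    have hu₀U : U ≤ u₀ := le_trans (le_trans (le_max_left _ _) (le_max_left _ _)) hu₀ψ
    have hu₀0 : 0 < u₀ := lt_of_lt_of_le hUpos hu₀U
    obtain ⟨hkey1, hkey2⟩ := hkey u₀ hu₀U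
    set u₁ : ℝ := α u₀ * u₀ with hu₁
    have hu₁0 : 0 < u₁ := mul_pos (hα u₀ hu₀0) hu₀0
    have hψu₁ : L + ε < ψ u₁ := by
      have : δ / M = 4 * ε := by rw [hε]; field_simp
      have h4 : ψ u₁ ≥ ψ u₀ + 4 * ε := by rw [← this]; exact hkey2
      linarith
    have hu₁W : u₁ < W := by
      by_contra h
      push_neg at h
      exact absurd (hWev u₁ h) (not_lt.mpr (le_of_lt hψu₁))
    -- bound f u₁ from above
    have hfub : f u₁ ≤ |f W| + K * W := by
      have h1 := hf u₁ W hu₁0 hWpos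
      have h2 : |u₁ - W| ≤ W := by
        rw [abs_sub_le_iff]; constructor <;> nlinarith
      have h3 : f u₁ - f W ≤ K * W := le_trans (le_trans (le_abs_self _) h1)
        (by nlinarith)
      nlinarith [le_abs_self (f W), neg_abs_le (f W)]
    -- bound f u₁ from below
    have hflb : -( W * Cb) + δ * u₀ ≤ f u₁ := by
      have h1 : α u₀ * f u₀ = u₁ * ψ u₀ := by
        rw [hψ, hu₁]; field_simp
      have h2 : -Cb ≤ ψ u₀ := (abs_le.mp (hψbd u₀ hu₀U)).1
      have h3 : -(W * Cb) ≤ u₁ * ψ u₀ := by nlinarith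
      nlinarith
    have hδV : |f W| + K * W + W * Cb + 1 ≤ δ * u₀ := by
      have hV' : (|f W| + K * W + W * Cb + 1) / δ ≤ u₀ := le_trans (le_max_right _ _) hu₀ψ
      rw [div_le_iff₀ hδ0] at hV'
      linarith [hV']
    linarith
  · -- not bounded above: limsup = sInf ∅ = 0
    have hempty : {a : ℝ | ∀ᶠ n in atTop, E n ≤ a} = ∅ := by
      ext a
      simp only [Set.mem_setOf_eq, Set.mem_empty_iff_false, iff_false]
      intro h
      exact hbdd ⟨a, by simpa [eventually_map] using h⟩
    rw [limsup_eq, hempty, Real.sInf_empty]
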